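/- Let N ≥ 1 and let h : ℤ → M_N(ℂ) satisfy Σ_{n∈ℤ} ‖h(n)‖_op < ∞. Let H be the bounded convolution operator on ℓ²(ℤ, ℂ^N) with kernel h, and let P be the orthogonal projection onto {Ψ ∈ ℓ²(ℤ, ℂ^N) : Ψ_n = 0 for all n < 0}. Then the off-diagonal part K := P H (1−P) + (1−P) H P is a compact operator on ℓ²(ℤ, ℂ^N). -/

import Mathlib

open scoped ComplexConjugate Matrix

noncomputable section

/-- ℓ²(ℤ, ℂ^N) -/
abbrev L2Z (N : ℕ) : Type := lp (fun _ : ℤ => EuclideanSpace ℂ (Fin N)) 2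

/-- The bounded operator on ℂ^N associated with an N×N complex matrix. -/
noncomputable def matCLM {N : ℕ} (A : Matrix (Fin N) (Fin N) ℂ) :
    EuclideanSpace ℂ (Fin N) →L[ℂ] EuclideanSpace ℂ (Fin N) :=
  Matrix.toEuclideanCLM (𝕜 := ℂ) A

variable {N : ℕ}


noncomputable def evalCLM (N : ℕ) (i : ℤ) : L2Z N →L[ℂ] EuclideanSpace ℂ (Fin N) :=
  LinearMap.mkContinuous
    { toFun := fun Ψ => Ψ i
      map_add' := fun f g => by
        show (↑(f + g) : ∀ _ : ℤ, EuclideanSpace ℂ (Fin N)) i = f i + g i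
        rw [lp.coeFn_add]; rfl
      map_smul' := fun c f => by
        show (↑(c • f) : ∀ _ : ℤ, EuclideanSpace ℂ (Fin N)) i = c • (f i)
        rw [lp.coeFn_smul]; rfl }
    1 (fun Ψ => by
      simpa using lp.norm_apply_le_norm (by norm_num : (2 : ENNReal) ≠ 0) Ψ i)

@[simp] lemma evalCLM_apply (i : ℤ) (Ψ : L2Z N) : evalCLM N i Ψ = Ψ i := rfl

lemma single_apply' (i : ℤ) (a : EuclideanSpace ℂ (Fin N)) (j : ℤ) :
    (lp.single (E := fun _ : ℤ => EuclideanSpace ℂ (Fin N)) 2 i a) j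
      = if j = i then a else 0 := by
  by_cases hj : j = i
  · subst hj; simp [lp.single_apply_self]
  · simp [hj, lp.single_apply_ne (E := fun _ : ℤ => EuclideanSpace ℂ (Fin N)) 2 i a hj]

noncomputable def sglCLM (N : ℕ) (i : ℤ) : EuclideanSpace ℂ (Fin N) →L[ℂ] L2Z N :=
  LinearMap.mkContinuous
    { toFun := fun a => lp.single 2 i a
      map_add' := fun a b => by
        apply lp.ext; funext j
        simp [single_apply', lp.coeFn_add, Pi.add_apply]
      map_smul' := fun c a => by simp [lp.single_smul] }
    1 (fun a => by
      simpa using (lp.norm_single (p := 2) (by norm_num) (fun _ : ℤ => a) i).le)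

@[simp] lemma sglCLM_apply (i : ℤ) (a : EuclideanSpace ℂ (Fin N)) (j : ℤ) :
    sglCLM N i a j = if j = i then a else 0 := single_apply' i a j

/-- the `m`-th piece of the off-diagonal part -/
noncomputable def offd (N : ℕ) (h : ℤ → Matrix (Fin N) (Fin N) ℂ) (m : ℤ) :
    L2Z N →L[ℂ] L2Z N :=
  ∑ n ∈ Finset.Ico (min m 0) (max m 0),
    (sglCLM N n) ∘L (matCLM (h m)) ∘L (evalCLM N (n - m))

lemma offd_coord (h : ℤ → Matrix (Fin N) (Fin N) ℂ) (m : ℤ) (Ψ : L2Z N) (k : ℤ) :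
    (offd N h m Ψ) k
      = if k ∈ Finset.Ico (min m 0) (max m 0) then matCLM (h m) (Ψ (k - m)) else 0 := by
  have h1 : offd N h m Ψ = ∑ n ∈ Finset.Ico (min m 0) (max m 0),
          ((sglCLM N n) ∘L (matCLM (h m)) ∘L (evalCLM N (n - m))) Ψ := by
    rw [offd, ContinuousLinearMap.sum_apply]
  rw [h1, lp.coeFn_sum, Finset.sum_apply]
  simp only [ContinuousLinearMap.comp_apply, sglCLM_apply, evalCLM_apply]
  rw [Finset.sum_ite_eq]

lemma rtwo : (2 : ENNReal).toReal = (2 : ℝ) := by norm_num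

lemma offd_norm_le (h : ℤ → Matrix (Fin N) (Fin N) ℂ) (m : ℤ) :
    ‖offd N h m‖ ≤ ‖matCLM (h m)‖ := by
  refine ContinuousLinearMap.opNorm_le_bound _ (norm_nonneg _) fun Ψ => ?_
  refine lp.norm_le_of_tsum_le (p := 2) (by rw [rtwo]; norm_num)
    (mul_nonneg (norm_nonneg _) (norm_nonneg _)) ?_
  rw [rtwo]
  set F := Finset.Ico (min m 0) (max m 0) with hF
  have key : ∑' i : ℤ, ‖(offd N h m Ψ) i‖ ^ (2:ℝ)
      = ∑ i ∈ F, ‖(offd N h m Ψ) i‖ ^ (2:ℝ) := by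
    refine tsum_eq_sum ?_
    intro i hi
    rw [offd_coord, if_neg hi, norm_zero, Real.zero_rpow (by norm_num)]
  rw [key]
  calc ∑ i ∈ F, ‖(offd N h m Ψ) i‖ ^ (2:ℝ)
      ≤ ∑ i ∈ F, ‖matCLM (h m)‖ ^ (2:ℝ) * ‖Ψ (i - m)‖ ^ (2:ℝ) := by
        refine Finset.sum_le_sum fun i hi => ?_
        rw [offd_coord, if_pos hi, ← Real.mul_rpow (norm_nonneg _) (norm_nonneg _)]
        exact Real.rpow_le_rpow (norm_nonneg _)
          ((matCLM (h m)).le_opNorm _) (by norm_num)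
    _ = ‖matCLM (h m)‖ ^ (2:ℝ) * ∑ i ∈ F, ‖Ψ (i - m)‖ ^ (2:ℝ) := by
        rw [Finset.mul_sum]
    _ = ‖matCLM (h m)‖ ^ (2:ℝ) * ∑ j ∈ F.image (· - m), ‖Ψ j‖ ^ (2:ℝ) := by
        rw [Finset.sum_image (by intro x _ y _ hxy; exact sub_left_injective hxy)]
    _ ≤ ‖matCLM (h m)‖ ^ (2:ℝ) * ‖Ψ‖ ^ (2:ℝ) := by
        refine mul_le_mul_of_nonneg_left ?_ (Real.rpow_nonneg (norm_nonneg _) _)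
        simpa [rtwo] using lp.sum_rpow_le_norm_rpow (p := 2)
          (by rw [rtwo]; norm_num) Ψ (F.image (· - m))
    _ = (‖matCLM (h m)‖ * ‖Ψ‖) ^ (2:ℝ) := by
        rw [Real.mul_rpow (norm_nonneg _) (norm_nonneg _)]

lemma isCompactOperator_findim_mid {X Y E : Type*} [NormedAddCommGroup X] [NormedSpace ℂ X]
    [NormedAddCommGroup Y] [NormedSpace ℂ Y] [NormedAddCommGroup E] [NormedSpace ℂ E]
    [FiniteDimensional ℂ E] (g : E →L[ℂ] Y) (f : X →L[ℂ] E) :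
    IsCompactOperator ⇑(g ∘L f) := by
  have hf : IsCompactOperator ⇑f := by
    refine ⟨Metric.closedBall 0 ‖f‖, isCompact_closedBall _ _, ?_⟩
    refine Filter.mem_of_superset (Metric.closedBall_mem_nhds (0:X) one_pos) fun x hx => ?_
    simp only [Set.mem_preimage, Metric.mem_closedBall, dist_zero_right] at *
    calc ‖f x‖ ≤ ‖f‖ * ‖x‖ := f.le_opNorm x
      _ ≤ ‖f‖ * 1 := by gcongr
      _ = ‖f‖ := mul_one _
  rw [ContinuousLinearMap.coe_comp']
  exact hf.continuous_comp g.continuous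

lemma isCompactOperator_sum {ι X Y : Type*} [NormedAddCommGroup X] [NormedSpace ℂ X]
    [NormedAddCommGroup Y] [NormedSpace ℂ Y] (s : Finset ι) (F : ι → X →L[ℂ] Y)
    (hF : ∀ i ∈ s, IsCompactOperator ⇑(F i)) :
    IsCompactOperator ⇑(∑ i ∈ s, F i) := by
  classical
  induction s using Finset.induction with
  | empty => simpa using isCompactOperator_zero
  | @insert a s hnot ih =>
    rw [Finset.sum_insert hnot, ContinuousLinearMap.coe_add']
    exact (hF _ (Finset.mem_insert_self _ _)).add
      (ih fun i hi => hF i (Finset.mem_insert_of_mem hi))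

lemma isCompactOperator_offd (h : ℤ → Matrix (Fin N) (Fin N) ℂ) (m : ℤ) :
    IsCompactOperator ⇑(offd N h m) := by
  rw [offd]
  exact isCompactOperator_sum _ _ fun n _ =>
    isCompactOperator_findim_mid (sglCLM N n) ((matCLM (h m)) ∘L (evalCLM N (n - m)))


/-- if P is the orthogonal projection onto the sequences supported on
{n ≥ 0} and H is a convolution operator with summable kernel, then the off-diagonal
part K = P H (1−P) + (1−P) H P is compact. -/
theorem statement3 (N : ℕ) (hN : 1 ≤ N)
    (h : ℤ → Matrix (Fin N) (Fin N) ℂ)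
    (hsum : Summable fun n : ℤ => ‖matCLM (h n)‖)
    (H P : L2Z N →L[ℂ] L2Z N)
    (hH : ∀ (Ψ : L2Z N) (n : ℤ), H Ψ n = ∑' m : ℤ, matCLM (h m) (Ψ (n - m)))
    (hP : ∀ (Ψ : L2Z N) (n : ℤ), P Ψ n = if 0 ≤ n then Ψ n else 0) :
    IsCompactOperator
      ((P ∘L H ∘L (1 - P) + (1 - P) ∘L H ∘L P : L2Z N →L[ℂ] L2Z N) : L2Z N → L2Z N) := by
  classical
  have hsum2 : Summable (fun m : ℤ => offd N h m) :=
    Summable.of_norm_bounded hsum (offd_norm_le h)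
  obtain ⟨B, hB⟩ := hsum2
  have hBc : IsCompactOperator (B : L2Z N → L2Z N) :=
    isCompactOperator_of_tendsto hB
      (Filter.Eventually.of_forall fun s =>
        isCompactOperator_sum s _ fun m _ => isCompactOperator_offd h m)
  have hsub : ∀ (Φ : L2Z N) (k : ℤ), ((1 - P) Φ) k = if 0 ≤ k then 0 else Φ k := by
    intro Φ k
    have h1 : (1 - P) Φ = Φ - P Φ := by
      rw [ContinuousLinearMap.sub_apply, ContinuousLinearMap.one_apply]
    rw [h1, lp.coeFn_sub, Pi.sub_apply, hP]
    by_cases hk : 0 ≤ k <;> simp [hk]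
  have hKB : (P ∘L H ∘L (1 - P) + (1 - P) ∘L H ∘L P) = B := by
    refine ContinuousLinearMap.ext fun Ψ => ?_
    apply lp.ext
    funext n
    have h2 : HasSum (fun m => offd N h m Ψ) (B Ψ) :=
      hB.mapL (ContinuousLinearMap.apply ℂ (L2Z N) Ψ)
    have h3 : HasSum (fun m => (offd N h m Ψ) n) ((B Ψ) n) := h2.mapL (evalCLM N n)
    have h4 : (B Ψ) n = ∑' m : ℤ,
        (if n ∈ Finset.Ico (min m 0) (max m 0) then matCLM (h m) (Ψ (n - m)) else 0) := by
      rw [← h3.tsum_eq]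
      exact tsum_congr fun m => offd_coord h m Ψ n
    have h5 : (((P ∘L H ∘L (1 - P) + (1 - P) ∘L H ∘L P : L2Z N →L[ℂ] L2Z N)) Ψ) n
        = (P (H ((1 - P) Ψ))) n + ((1 - P) (H (P Ψ))) n := by
      rw [ContinuousLinearMap.add_apply, lp.coeFn_add, Pi.add_apply]
      rfl
    rw [h5, h4, hP, hsub]
    by_cases hn : 0 ≤ n
    · rw [if_pos hn, if_pos hn, add_zero, hH]
      refine tsum_congr fun m => ?_
      rw [hsub, apply_ite (matCLM (h m)), map_zero]
      by_cases hm : 0 ≤ n - m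
      · rw [if_pos hm,
          if_neg (by simp only [Finset.mem_Ico, min_le_iff, lt_max_iff]; omega)]
      · rw [if_neg hm,
          if_pos (by simp only [Finset.mem_Ico, min_le_iff, lt_max_iff]; omega)]
    · rw [if_neg hn, if_neg hn, zero_add, hH]
      refine tsum_congr fun m => ?_
      rw [hP, apply_ite (matCLM (h m)), map_zero]
      by_cases hm : 0 ≤ n - m
      · rw [if_pos hm,
          if_pos (by simp only [Finset.mem_Ico, min_le_iff, lt_max_iff]; omega)]
      · rw [if_neg hm,
          if_neg (by simp only [Finset.mem_Ico, min_le_iff, lt_max_iff]; omega)]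
  rw [hKB]
  exact hBc
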